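/- Let Ω ⊆ ℝ^d be open and contained in a slab, i.e., there are a unit vector e ∈ ℝ^d and reals a < b such that Ω ⊆ {x : a < ⟨e,x⟩ < b}. Then for every u in the domain of the Dirichlet gradient grad₀ (the closure of the gradient on C_c^∞(Ω) in L²), one has ‖u‖_{L²(Ω)} ≤ (b−a)·‖grad₀ u‖_{L²(Ω)^d} (Poincaré inequality). -/

import Mathlib

open MeasureTheory

section Aux

variable {d : ℕ}
local notation "Ed" => EuclideanSpace ℝ (Fin d)

lemma inner_gradient_eq (f : Ed → ℝ) (x v : Ed) :
    (inner ℝ (gradient f x) v : ℝ) = fderiv ℝ f x v := by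
  rw [gradient, ← InnerProductSpace.toDual_apply_apply, LinearIsometryEquiv.apply_symm_apply]

lemma norm_gradient_eq (f : Ed → ℝ) (x : Ed) :
    ‖gradient f x‖ = ‖fderiv ℝ f x‖ := by
  rw [gradient, LinearIsometryEquiv.norm_map]

lemma gradient_add' {f g : Ed → ℝ} {x : Ed} (hf : DifferentiableAt ℝ f x)
    (hg : DifferentiableAt ℝ g x) :
    gradient (fun y => f y + g y) x = gradient f x + gradient g x := by
  rw [gradient, gradient, gradient, fderiv_fun_add hf hg, map_add]

lemma gradient_smul' {f : Ed → ℝ} {x : Ed} (hf : DifferentiableAt ℝ f x) (c : ℝ) :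
    gradient (fun y => c • f y) x = c • gradient f x := by
  rw [gradient, gradient, fderiv_fun_const_smul hf c]
  exact (InnerProductSpace.toDual ℝ (EuclideanSpace ℝ (Fin d))).symm.map_smul c _

lemma continuous_gradient {f : Ed → ℝ} (hf : ContDiff ℝ (⊤ : ℕ∞) f) :
    Continuous (gradient f) := by
  have : Continuous (fderiv ℝ f) := hf.continuous_fderiv (by simp)
  exact ((InnerProductSpace.toDual ℝ Ed).symm.continuous.comp this)

/-- The core integral inequality for smooth compactly supported functions. -/
lemma key_ineq (Ω : Set Ed) (e : Ed) (he : ‖e‖ = 1) (a b : ℝ) (hab : a < b)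
    (hslab : Ω ⊆ {x | a < (inner ℝ e x : ℝ) ∧ (inner ℝ e x : ℝ) < b})
    (φ : Ed → ℝ) (hφ : ContDiff ℝ (⊤ : ℕ∞) φ) (hc : HasCompactSupport φ)
    (hsub : tsupport φ ⊆ Ω) :
    ∫ x, φ x ^ 2 ≤ (b - a) * ∫ x, |φ x| * ‖gradient φ x‖ := by
  have hφd : Differentiable ℝ φ := hφ.differentiable (by simp)
  set c : ℝ := (a + b) / 2 with hc_def
  set f : Ed → ℝ := fun x => (inner ℝ e x : ℝ) - c with hf_def
  set g : Ed → ℝ := fun x => φ x * φ x with hg_def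
  -- Lipschitz facts
  have hLipf : LipschitzWith ‖innerSL ℝ e‖₊ f := by
    intro x y
    simp only [hf_def, edist_sub_right]
    exact (innerSL ℝ e).lipschitz x y
  have hgc : HasCompactSupport g := hc.mul_left
  have hgsm : ContDiff ℝ 1 g := (hφ.mul hφ).of_le (mod_cast le_top)
  obtain ⟨D, hLipg⟩ := hgsm.lipschitzWith_of_hasCompactSupport hgc one_ne_zero
  -- line derivatives
  have hf1 : ∀ x, HasFDerivAt f (innerSL ℝ e) x := by
    intro x
    simpa [hf_def] using ((innerSL ℝ e).hasFDerivAt (x := x)).sub_const c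
  have hLf : ∀ x : Ed, lineDeriv ℝ f x e = 1 := by
    intro x
    rw [((hf1 x).hasLineDerivAt e).lineDeriv]
    have : (inner ℝ e e : ℝ) = 1 := by
      rw [real_inner_self_eq_norm_sq, he]; norm_num
    simpa using this
  have hLg : ∀ x : Ed, lineDeriv ℝ g x (-e) =
      -(2 * (φ x * (inner ℝ (gradient φ x) e : ℝ))) := by
    intro x
    have hd := ((hφd x).hasFDerivAt.mul (hφd x).hasFDerivAt).hasLineDerivAt (-e)
    rw [show g = φ * φ from rfl, hd.lineDeriv]
    rw [inner_gradient_eq]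
    simp
    ring
  -- integration by parts
  have hibp := hLipf.integral_lineDeriv_mul_eq hLipg hgc e (μ := volume)
  have hA : ∫ x, φ x ^ 2 = ∫ x, lineDeriv ℝ f x e * g x := by
    apply integral_congr_ae
    filter_upwards with x
    rw [hLf x]; simp [hg_def]; ring
  -- the dominating function
  set H : Ed → ℝ := fun x => |φ x| * ‖gradient φ x‖ with hH_def
  have hHc : Continuous H := by
    have h1 : Continuous fun x => |φ x| := hφ.continuous.abs
    exact h1.mul (continuous_gradient hφ).norm
  have hHsupp : HasCompactSupport H := by
    have : HasCompactSupport fun x => |φ x| := by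
      simpa [Real.norm_eq_abs] using hc.norm
    exact this.mul_right
  have hHint : Integrable H volume := hHc.integrable_of_hasCompactSupport hHsupp
  -- pointwise bound
  have hbound : ∀ x : Ed, ‖lineDeriv ℝ g x (-e) * f x‖ ≤ (b - a) * H x := by
    intro x
    by_cases hx : x ∈ tsupport φ
    · have hxΩ := hslab (hsub hx)
      have h1 : |f x| ≤ (b - a) / 2 := by
        rw [abs_le]
        constructor <;> [linarith [hxΩ.1]; linarith [hxΩ.2]]
      have h2 : |(inner ℝ (gradient φ x) e : ℝ)| ≤ ‖gradient φ x‖ := by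
        calc |(inner ℝ (gradient φ x) e : ℝ)| ≤ ‖gradient φ x‖ * ‖e‖ :=
          abs_real_inner_le_norm _ _
        _ = ‖gradient φ x‖ := by rw [he, mul_one]
      rw [hLg x]
      rw [Real.norm_eq_abs, abs_mul, abs_neg, abs_mul, abs_mul]
      calc |2| * (|φ x| * |(inner ℝ (gradient φ x) e : ℝ)|) * |f x|
          ≤ |2| * (|φ x| * ‖gradient φ x‖) * ((b - a) / 2) := by
            apply mul_le_mul
            · apply mul_le_mul_of_nonneg_left _ (abs_nonneg 2)
              exact mul_le_mul_of_nonneg_left h2 (abs_nonneg _)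
            · exact h1
            · exact abs_nonneg _
            · positivity
        _ = (b - a) * H x := by rw [hH_def]; simp [abs_of_nonneg]; ring
    · have hφx : φ x = 0 := image_eq_zero_of_notMem_tsupport hx
      have hHx : H x = 0 := by simp [hH_def, hφx]
      rw [hLg x, hφx, hHx]
      simp
  calc ∫ x, φ x ^ 2 = ∫ x, lineDeriv ℝ g x (-e) * f x := by rw [hA, hibp]
    _ ≤ ‖∫ x, lineDeriv ℝ g x (-e) * f x‖ := le_abs_self _
    _ ≤ ∫ x, (b - a) * H x := by
        apply norm_integral_le_of_norm_le (hHint.const_mul _)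
        filter_upwards with x using hbound x
    _ = (b - a) * ∫ x, H x := integral_const_mul _ _

end Aux


section Pair

variable {d : ℕ}
local notation "Ed" => EuclideanSpace ℝ (Fin d)

lemma hasCompactSupport_gradient {φ : Ed → ℝ} (hc : HasCompactSupport φ) :
    HasCompactSupport (gradient φ) := by
  have : HasCompactSupport (fderiv ℝ φ) := HasCompactSupport.fderiv (𝕜 := ℝ) hc
  exact this.comp_left (g := (InnerProductSpace.toDual ℝ (EuclideanSpace ℝ (Fin d))).symm)
    (map_zero _)

lemma pair_ineq (Ω : Set Ed) (e : Ed) (he : ‖e‖ = 1) (a b : ℝ) (hab : a < b)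
    (hslab : Ω ⊆ {x | a < (inner ℝ e x : ℝ) ∧ (inner ℝ e x : ℝ) < b})
    (p : Lp ℝ 2 (volume : Measure Ed) × Lp Ed 2 (volume : Measure Ed))
    (φ : Ed → ℝ) (hφ : ContDiff ℝ (⊤ : ℕ∞) φ) (hc : HasCompactSupport φ)
    (hsub : tsupport φ ⊆ Ω) (h1 : ⇑p.1 =ᵐ[volume] φ) (h2 : ⇑p.2 =ᵐ[volume] gradient φ) :
    ‖p.1‖ ≤ (b - a) * ‖p.2‖ := by
  have huc : Continuous fun x : Ed => |φ x| := hφ.continuous.abs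
  have hucs : HasCompactSupport fun x : Ed => |φ x| := by
    simpa [Real.norm_eq_abs] using hc.norm
  have hvc : Continuous fun x : Ed => ‖gradient φ x‖ := (continuous_gradient hφ).norm
  have hvcs : HasCompactSupport fun x : Ed => ‖gradient φ x‖ :=
    (hasCompactSupport_gradient hc).norm
  have humem : MemLp (fun x : Ed => |φ x|) 2 volume :=
    huc.memLp_of_hasCompactSupport hucs
  have hvmem : MemLp (fun x : Ed => ‖gradient φ x‖) 2 volume :=
    hvc.memLp_of_hasCompactSupport hvcs
  set u : Lp ℝ 2 (volume : Measure Ed) := humem.toLp _ with hu_def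
  set v : Lp ℝ 2 (volume : Measure Ed) := hvmem.toLp _ with hv_def
  -- norms
  have hnu : ‖p.1‖ = ‖u‖ := by
    have e1 : (inner ℝ p.1 p.1 : ℝ) = (inner ℝ u u : ℝ) := by
      rw [MeasureTheory.L2.inner_def, MeasureTheory.L2.inner_def]
      apply integral_congr_ae
      filter_upwards [h1, humem.coeFn_toLp] with x hx hy
      simp [hx, hy, hu_def, RCLike.inner_apply, abs_mul_abs_self]
    have := real_inner_self_eq_norm_sq p.1
    have := real_inner_self_eq_norm_sq u
    nlinarith [norm_nonneg p.1, norm_nonneg u]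
  have hnv : ‖p.2‖ = ‖v‖ := by
    have e1 : (inner ℝ p.2 p.2 : ℝ) = (inner ℝ v v : ℝ) := by
      rw [MeasureTheory.L2.inner_def, MeasureTheory.L2.inner_def]
      apply integral_congr_ae
      filter_upwards [h2, hvmem.coeFn_toLp] with x hx hy
      rw [hx, hy, real_inner_self_eq_norm_sq, RCLike.inner_apply]
      simp
      ring
    have := real_inner_self_eq_norm_sq p.2
    have := real_inner_self_eq_norm_sq v
    nlinarith [norm_nonneg p.2, norm_nonneg v]
  -- main chain
  have hkey := key_ineq Ω e he a b hab hslab φ hφ hc hsub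
  have hsq : ‖p.1‖ ^ 2 = ∫ x, φ x ^ 2 := by
    rw [← real_inner_self_eq_norm_sq p.1, MeasureTheory.L2.inner_def]
    apply integral_congr_ae
    filter_upwards [h1] with x hx
    simp [hx, RCLike.inner_apply, sq]
  have hcs : (∫ x, |φ x| * ‖gradient φ x‖) ≤ ‖u‖ * ‖v‖ := by
    have : (inner ℝ u v : ℝ) = ∫ x, |φ x| * ‖gradient φ x‖ := by
      rw [MeasureTheory.L2.inner_def]
      apply integral_congr_ae
      filter_upwards [humem.coeFn_toLp, hvmem.coeFn_toLp] with x hx hy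
      simp [hx, hy, hu_def, hv_def, RCLike.inner_apply, mul_comm]
    rw [← this]
    exact real_inner_le_norm u v
  have hchain : ‖p.1‖ ^ 2 ≤ (b - a) * (‖p.1‖ * ‖p.2‖) := by
    rw [hsq]
    calc (∫ x, φ x ^ 2) ≤ (b - a) * ∫ x, |φ x| * ‖gradient φ x‖ := hkey
      _ ≤ (b - a) * (‖u‖ * ‖v‖) := by
          apply mul_le_mul_of_nonneg_left hcs (by linarith)
      _ = (b - a) * (‖p.1‖ * ‖p.2‖) := by rw [hnu, hnv]
  rcases eq_or_lt_of_le (norm_nonneg p.1) with h0 | h0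
  · rw [← h0]
    have := norm_nonneg p.2
    nlinarith
  · nlinarith
end Pair

/-- The graph of the gradient on smooth compactly supported functions in `Ω`, as a
subspace of `L²(ℝ^d) × L²(ℝ^d)^d`: the span of all pairs `(φ, grad φ)` with
`φ ∈ C_c^∞(Ω)`. -/
noncomputable def gradGraph (d : ℕ) (Ω : Set (EuclideanSpace ℝ (Fin d))) :
    Submodule ℝ (Lp ℝ 2 (volume : Measure (EuclideanSpace ℝ (Fin d))) ×
      Lp (EuclideanSpace ℝ (Fin d)) 2 (volume : Measure (EuclideanSpace ℝ (Fin d)))) :=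
  Submodule.span ℝ {p | ∃ φ : EuclideanSpace ℝ (Fin d) → ℝ,
    ContDiff ℝ (⊤ : ℕ∞) φ ∧ HasCompactSupport φ ∧ tsupport φ ⊆ Ω ∧
    ⇑p.1 =ᵐ[volume] φ ∧ ⇑p.2 =ᵐ[volume] gradient φ}

/-- The graph of `grad₀`, the closure of the gradient on `C_c^∞(Ω)` in `L²`. -/
noncomputable def grad0Graph (d : ℕ) (Ω : Set (EuclideanSpace ℝ (Fin d))) :=
  (gradGraph d Ω).topologicalClosure

section Span

/-- The generating set of `gradGraph` is already a submodule. -/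
noncomputable def gradSet (d : ℕ) (Ω : Set (EuclideanSpace ℝ (Fin d))) :
    Submodule ℝ (Lp ℝ 2 (volume : Measure (EuclideanSpace ℝ (Fin d))) ×
      Lp (EuclideanSpace ℝ (Fin d)) 2 (volume : Measure (EuclideanSpace ℝ (Fin d)))) where
  carrier := {p | ∃ φ : EuclideanSpace ℝ (Fin d) → ℝ,
    ContDiff ℝ (⊤ : ℕ∞) φ ∧ HasCompactSupport φ ∧ tsupport φ ⊆ Ω ∧
    ⇑p.1 =ᵐ[volume] φ ∧ ⇑p.2 =ᵐ[volume] gradient φ}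
  zero_mem' := by
    refine ⟨fun _ => 0, contDiff_const, ?_, ?_, Lp.coeFn_zero ℝ 2 volume, ?_⟩
    · simp [HasCompactSupport, tsupport, Function.support]
    · simp [tsupport, Function.support]
    · rw [Prod.snd_zero]
      filter_upwards [Lp.coeFn_zero (EuclideanSpace ℝ (Fin d)) 2 volume] with x hx
      simp only [Pi.zero_apply] at hx
      exact hx.trans (gradient_const x (0:ℝ)).symm
  add_mem' := by
    rintro p q ⟨φ, hφ, hcφ, hsφ, hp1, hp2⟩ ⟨ψ, hψ, hcψ, hsψ, hq1, hq2⟩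
    refine ⟨fun x => φ x + ψ x, hφ.add hψ, ?_, ?_, ?_, ?_⟩
    · exact hcφ.add hcψ
    · exact subset_trans (tsupport_add _ _) (Set.union_subset hsφ hsψ)
    · rw [Prod.fst_add]
      filter_upwards [Lp.coeFn_add p.1 q.1, hp1, hq1] with x hx h1 h2
      rw [hx, Pi.add_apply, h1, h2]
    · rw [Prod.snd_add]
      filter_upwards [Lp.coeFn_add p.2 q.2, hp2, hq2] with x hx h1 h2
      rw [hx, Pi.add_apply, h1, h2]
      exact (gradient_add' ((hφ.differentiable (by simp)) x)
        ((hψ.differentiable (by simp)) x)).symm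
  smul_mem' := by
    rintro c p ⟨φ, hφ, hcφ, hsφ, hp1, hp2⟩
    refine ⟨fun x => c • φ x, (contDiff_const (c := c)).smul hφ, ?_, ?_, ?_, ?_⟩
    · apply hcφ.mono
      exact Function.support_const_smul_subset c φ
    · refine subset_trans (closure_mono (Function.support_const_smul_subset c φ)) hsφ
    · rw [Prod.smul_fst]
      filter_upwards [Lp.coeFn_smul c p.1, hp1] with x hx h1
      rw [hx, Pi.smul_apply, h1]
    · rw [Prod.smul_snd]
      filter_upwards [Lp.coeFn_smul c p.2, hp2] with x hx h1
      rw [hx, Pi.smul_apply, h1]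
      exact (gradient_smul' ((hφ.differentiable (by simp)) x) c).symm

lemma gradGraph_le_gradSet {d : ℕ} (Ω : Set (EuclideanSpace ℝ (Fin d))) :
    gradGraph d Ω ≤ gradSet d Ω := by
  rw [gradGraph]
  exact Submodule.span_le.2 (fun p hp => hp)

end Span

/-- Poincaré's inequality: if the open set `Ω ⊆ ℝ^d` is contained in a slab
`{x : a < ⟨e,x⟩ < b}` (with `e` a unit vector), then for every `u` in the domain of
`grad₀` one has `‖u‖_{L²(Ω)} ≤ (b−a)·‖grad₀ u‖_{L²(Ω)^d}`. -/
theorem poincare_inequality (d : ℕ) (Ω : Set (EuclideanSpace ℝ (Fin d))) (hΩ : IsOpen Ω)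
    (e : EuclideanSpace ℝ (Fin d)) (he : ‖e‖ = 1) (a b : ℝ) (hab : a < b)
    (hslab : Ω ⊆ {x | a < (inner ℝ e x : ℝ) ∧ (inner ℝ e x : ℝ) < b}) :
    ∀ p ∈ grad0Graph d Ω, ‖p.1‖ ≤ (b - a) * ‖p.2‖ := by
  intro p hp
  let S : Set (Lp ℝ 2 (volume : Measure (EuclideanSpace ℝ (Fin d))) ×
      Lp (EuclideanSpace ℝ (Fin d)) 2 (volume : Measure (EuclideanSpace ℝ (Fin d)))) :=
    {q | ‖q.1‖ ≤ (b - a) * ‖q.2‖}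
  have hS : IsClosed S :=
    isClosed_le continuous_fst.norm (continuous_const.mul continuous_snd.norm)
  have hsub : (gradGraph d Ω : Set _) ⊆ S := by
    intro q hq
    obtain ⟨φ, hφ, hcφ, hsφ, h1, h2⟩ := gradGraph_le_gradSet Ω hq
    exact pair_ineq Ω e he a b hab hslab q φ hφ hcφ hsφ h1 h2
  have hp' : p ∈ closure (gradGraph d Ω : Set _) := by
    rw [← Submodule.topologicalClosure_coe]
    exact hp
  exact closure_minimal hsub hS hp'
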